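/- Every locally countable lower finite normed lattice has cardinality at most ℵ₁ and the order type of the range of its norm is at most ω₁. -/

import Mathlib

universe u v

private lemma stmt_14_aux {α : Type u} {ι : Type v} (f : ι → Set α)
    (hcov : ⋃ i, f i = Set.univ) (hι : Cardinal.mk ι ≤ Cardinal.aleph 1)
    (hf : ∀ i, (f i).Countable) : Cardinal.mk α ≤ Cardinal.aleph 1 := by
  have hle := Cardinal.mk_iUnion_le_lift f
  rw [hcov, Cardinal.mk_univ] at hle
  refine Cardinal.lift_le.{v}.mp (le_trans hle ?_)
  calc Cardinal.lift.{u} (Cardinal.mk ι) * ⨆ i, Cardinal.lift.{v} (Cardinal.mk (f i))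
      ≤ Cardinal.aleph.{max u v} 1 * Cardinal.aleph0.{max u v} := by
        refine mul_le_mul' ((Cardinal.lift_le.mpr hι).trans_eq ?_)
          (ciSup_le' fun i => (Cardinal.lift_le.mpr (hf i).le_aleph0).trans_eq
            Cardinal.lift_aleph0)
        simp
    _ ≤ Cardinal.aleph.{max u v} 1 * Cardinal.aleph.{max u v} 1 :=
        mul_le_mul' le_rfl (Cardinal.aleph0_le_aleph 1)
    _ = Cardinal.aleph.{max u v} 1 := Cardinal.mul_eq_self (Cardinal.aleph0_le_aleph 1)
    _ = Cardinal.lift.{v} (Cardinal.aleph.{u} 1) := by simp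

/-- Every locally countable lower finite normed lattice has cardinality at most ℵ₁ and the
order type of the range of its norm is at most ω₁. -/
theorem stmt_14 (K : Type*) [Lattice K] [OrderBot K]
    (hLF : ∀ q : K, (Set.Iic q).Finite)
    (d : K → Ordinal) (hd : ∀ x y : K, d (x ⊔ y) = max (d x) (d y)) (hd0 : d ⊥ = 0)
    (hloc : ∀ ξ : Ordinal, {x : K | d x = ξ}.Countable) :
    Cardinal.mk K ≤ Cardinal.aleph 1 ∧
    Ordinal.type ((· < ·) : ↥(Set.range d) → ↥(Set.range d) → Prop) ≤ (Cardinal.aleph 1).ord := by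
  -- Key lemma: for α in the range of d, the set of elements of norm ≤ α is countable.
  have key : ∀ a : K, {x : K | d x ≤ d a}.Countable := by
    intro a
    have hsub : {x : K | d x ≤ d a} ⊆ ⋃ y ∈ {y : K | d y = d a}, Set.Iic y := by
      intro x hx
      refine Set.mem_biUnion (show d (x ⊔ a) = d a by
        rw [hd]; exact max_eq_right hx) le_sup_left
    exact Set.Countable.mono hsub
      ((hloc (d a)).biUnion fun y _ => (hLF y).countable)
  -- Hence every initial segment of the range of d is countable.
  have seg : ∀ a : K, {ξ : Ordinal | ξ ∈ Set.range d ∧ ξ ≤ d a}.Countable := by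
    intro a
    have hsub : {ξ : Ordinal | ξ ∈ Set.range d ∧ ξ ≤ d a} ⊆ d '' {x : K | d x ≤ d a} := by
      rintro ξ ⟨⟨x, rfl⟩, hξ⟩
      exact ⟨x, hξ, rfl⟩
    exact Set.Countable.mono hsub ((key a).image d)
  -- Order type bound.
  have htype : Ordinal.type ((· < ·) : ↥(Set.range d) → ↥(Set.range d) → Prop)
      ≤ (Cardinal.aleph 1).ord := by
    by_contra h
    push_neg at h
    obtain ⟨b, hb⟩ := Ordinal.typein_surj
      ((· < ·) : ↥(Set.range d) → ↥(Set.range d) → Prop) h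
    have hcard : (Ordinal.typein ((· < ·) : ↥(Set.range d) → ↥(Set.range d) → Prop) b).card
        ≤ Cardinal.aleph0 := by
      rw [Ordinal.card_typein]
      obtain ⟨a, ha⟩ := b.2
      have hcnt : Set.Countable {c : ↥(Set.range d) | (c : Ordinal) < (b : Ordinal)} := by
        have hmt : Set.MapsTo (Subtype.val) {c : ↥(Set.range d) | (c : Ordinal) < (b : Ordinal)}
            {ξ : Ordinal | ξ ∈ Set.range d ∧ ξ ≤ d a} := by
          rintro ⟨c, hc⟩ h
          exact ⟨hc, by rw [ha]; exact le_of_lt h⟩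
        exact ((seg a).preimage Subtype.val_injective).mono hmt.subset_preimage
      exact Cardinal.mk_le_aleph0_iff.mpr hcnt.to_subtype
    have hω : (Cardinal.aleph 1).ord ≤
        Ordinal.typein ((· < ·) : ↥(Set.range d) → ↥(Set.range d) → Prop) b := by
      rw [hb]
    have := Ordinal.card_le_card hω
    rw [Cardinal.card_ord] at this
    exact absurd (this.trans hcard) (by simp [Cardinal.aleph0_lt_aleph_one.not_ge])
  refine ⟨?_, htype⟩
  -- Cardinality bound.
  have hrange : Cardinal.mk ↥(Set.range d) ≤ Cardinal.aleph 1 := by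
    have := Ordinal.card_le_card htype
    rwa [Ordinal.card_type, Cardinal.card_ord] at this
  refine stmt_14_aux (fun ξ : ↥(Set.range d) => {x : K | d x = (ξ : Ordinal)}) ?_ hrange
    (fun ξ => hloc (ξ : Ordinal))
  ext x
  simp only [Set.mem_iUnion, Set.mem_setOf_eq, Set.mem_univ, iff_true]
  exact ⟨⟨d x, ⟨x, rfl⟩⟩, rfl⟩
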